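/- For all L, M ∈ 𝐋 the following hold: (a) if O ∈ 𝐎*(L,L) and P ∈ 𝐎*(L,M), then the product PO belongs to 𝐎*(L,M); (b) if P ∈ 𝐎*(L,M), then Pᵀ ∈ 𝐎*(M,L); (c) if (MᵀL)_{t,t} is symmetric for every t = 1,…,T, then 𝐎*(L,M) = 𝐎*(M,L). -/

import Mathlib

open Matrix Filter Topology

/-- Square matrices of size `dT × dT`, indexed by blocks: index `(t, i)` is
row/column `i` within block `t`. -/
abbrev Mat (d T : ℕ) := Matrix (Fin T × Fin d) (Fin T × Fin d) ℝ

/-- The `t`-th diagonal `d × d` block of a `dT × dT` matrix. -/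
def blk {d T : ℕ} (A : Mat d T) (t : Fin T) : Matrix (Fin d) (Fin d) ℝ :=
  fun i j => A (t, i) (t, j)

/-- The `t`-th block column of a `dT × dT` matrix, a `dT × d` matrix. -/
def colBlk {d T : ℕ} (A : Mat d T) (t : Fin T) : Matrix (Fin T × Fin d) (Fin d) ℝ :=
  fun p j => A p (t, j)

/-- Membership in `𝐋`: block lower triangular matrices. -/
def memL {d T : ℕ} (A : Mat d T) : Prop :=
  ∀ (t s : Fin T) (i j : Fin d), t < s → A (t, i) (s, j) = 0

/-- Membership in `𝐎`: block diagonal matrices with orthogonal `d × d` diagonal blocks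
(equivalently: block diagonal and orthogonal). -/
def memO {d T : ℕ} (O : Mat d T) : Prop :=
  (∀ (t s : Fin T) (i j : Fin d), t ≠ s → O (t, i) (s, j) = 0) ∧ Oᵀ * O = 1

/-- The Frobenius norm of a real matrix. -/
noncomputable def frobNorm {m n : Type*} [Fintype m] [Fintype n] (A : Matrix m n ℝ) : ℝ :=
  Real.sqrt (∑ i, ∑ j, (A i j) ^ 2)

/-- The Frobenius inner product of two real matrices. -/
noncomputable def frobInner {m n : Type*} [Fintype m] [Fintype n] (A B : Matrix m n ℝ) : ℝ :=
  ∑ i, ∑ j, A i j * B i j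

/-- The adapted Bures–Wasserstein distance `d_ABW(L, M) = inf_{O ∈ 𝐎} ‖L - M O‖_F`. -/
noncomputable def dABW {d T : ℕ} (L M : Mat d T) : ℝ :=
  sInf {r : ℝ | ∃ O : Mat d T, memO O ∧ r = frobNorm (L - M * O)}

/-- The set `𝐎*(L, M)` of optimizers of `inf_{O ∈ 𝐎} ‖L - M O‖_F`. -/
noncomputable def OStar {d T : ℕ} (L M : Mat d T) : Set (Mat d T) :=
  {O | memO O ∧ frobNorm (L - M * O) = dABW L M}

/-- The set `𝐕(L) = {M P - L : M ∈ 𝐋, P ∈ 𝐎*(L, M)}`. -/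
noncomputable def VSet {d T : ℕ} (L : Mat d T) : Set (Mat d T) :=
  {V | ∃ M P : Mat d T, memL M ∧ P ∈ OStar L M ∧ V = M * P - L}

/-- The set `𝒱(L) = {V ∈ 𝐋 : (Vᵀ L)_{t,t} is symmetric for all t}`. -/
def calV {d T : ℕ} (L : Mat d T) : Set (Mat d T) :=
  {V | memL V ∧ ∀ t : Fin T, (blk (Vᵀ * L) t).IsSymm}

/-- The set `𝐋^reg = {L ∈ 𝐋 : (Lᵀ L)_{t,t} is positive definite for all t}`. -/
def LReg {d T : ℕ} : Set (Mat d T) :=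
  {L | memL L ∧ ∀ t : Fin T, (blk (Lᵀ * L) t).PosDef}

/-- The sum of the singular values of a real square matrix `A`,
i.e. the trace of the positive semidefinite square root of `Aᵀ A`. -/
noncomputable def svSum {n : ℕ} (A : Matrix (Fin n) (Fin n) ℝ) : ℝ :=
  ((Matrix.posSemidef_conjTranspose_mul_self A).1.eigenvectorUnitary.1 *
    Matrix.diagonal ((RCLike.ofReal : ℝ → ℝ) ∘ (√·) ∘ (Matrix.posSemidef_conjTranspose_mul_self A).1.eigenvalues) *
    (star (Matrix.posSemidef_conjTranspose_mul_self A).1.eigenvectorUnitary :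
      Matrix (Fin n) (Fin n) ℝ)).trace

/-- The operator norm of a real matrix: the supremum of the euclidean norm `‖A x‖₂`
over the euclidean unit ball. -/
noncomputable def opNorm {m n : Type*} [Fintype m] [Fintype n] (A : Matrix m n ℝ) : ℝ :=
  sSup {r : ℝ | ∃ x : n → ℝ, (∑ j, (x j) ^ 2) ≤ 1 ∧ r = Real.sqrt (∑ i, (A.mulVec x i) ^ 2)}

section Aux

variable {d T : ℕ}

lemma frobNorm_nonneg {m n : Type*} [Fintype m] [Fintype n] (A : Matrix m n ℝ) :
    0 ≤ frobNorm A := Real.sqrt_nonneg _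

lemma frobNorm_neg (A : Mat d T) : frobNorm (-A) = frobNorm A := by
  simp [frobNorm]

lemma frobNorm_zero : frobNorm (0 : Mat d T) = 0 := by
  simp [frobNorm]

lemma frobNorm_eq_zero {A : Mat d T} (h : frobNorm A = 0) : A = 0 := by
  unfold frobNorm at h
  have hsum : (∑ i, ∑ j, (A i j) ^ 2) = 0 := by
    have h1 := Real.sqrt_eq_zero'.mp h
    have hnn : 0 ≤ ∑ i, ∑ j, (A i j) ^ 2 :=
      Finset.sum_nonneg fun i _ => Finset.sum_nonneg fun j _ => sq_nonneg _
    linarith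
  ext i j
  have h1 := (Finset.sum_eq_zero_iff_of_nonneg
    (fun i _ => Finset.sum_nonneg fun j _ => sq_nonneg (A i j))).mp hsum i (Finset.mem_univ i)
  have h2 := (Finset.sum_eq_zero_iff_of_nonneg
    (fun j _ => sq_nonneg (A i j))).mp h1 j (Finset.mem_univ j)
  have := pow_eq_zero_iff (two_ne_zero) |>.mp h2
  simpa using this

lemma frobNorm_eq_sqrt_trace (A : Mat d T) :
    frobNorm A = Real.sqrt ((Aᵀ * A).trace) := by
  unfold frobNorm
  congr 1
  rw [Matrix.trace, Finset.sum_comm]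
  simp [Matrix.diag, Matrix.mul_apply, sq]

lemma memO_one : memO (1 : Mat d T) := by
  refine ⟨fun t s i j hts => ?_, by simp⟩
  exact Matrix.one_apply_ne (by simp [Prod.ext_iff, hts])

lemma memO_mul_transpose {O : Mat d T} (hO : memO O) : O * Oᵀ = 1 :=
  mul_eq_one_comm.mp hO.2

lemma memO_transpose {O : Mat d T} (hO : memO O) : memO Oᵀ := by
  refine ⟨fun t s i j hts => ?_, ?_⟩
  · exact hO.1 s t j i (Ne.symm hts)
  · rw [Matrix.transpose_transpose]; exact memO_mul_transpose hO

lemma memO_mul {O P : Mat d T} (hO : memO O) (hP : memO P) : memO (O * P) := by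
  refine ⟨fun t s i j hts => ?_, ?_⟩
  · rw [Matrix.mul_apply]
    apply Finset.sum_eq_zero
    rintro ⟨u, k⟩ _
    by_cases h : u = t
    · subst h; rw [hP.1 u s k j hts, mul_zero]
    · rw [hO.1 t u i k (Ne.symm h), zero_mul]
  · rw [Matrix.transpose_mul, Matrix.mul_assoc, ← Matrix.mul_assoc Oᵀ O P, hO.2,
      Matrix.one_mul, hP.2]

lemma frob_mul_orth (A : Mat d T) {O : Mat d T} (hO : memO O) :
    frobNorm (A * O) = frobNorm A := by
  have hOO := memO_mul_transpose hO
  have hcancel : ∀ X : Mat d T, O * (Oᵀ * X) = X := fun X => by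
    rw [← Matrix.mul_assoc, hOO, Matrix.one_mul]
  rw [frobNorm_eq_sqrt_trace, frobNorm_eq_sqrt_trace]
  congr 1
  rw [Matrix.transpose_mul, Matrix.trace_mul_comm]
  rw [Matrix.trace_mul_comm Aᵀ A]
  congr 1
  simp [Matrix.mul_assoc, hcancel]

end Aux
section Aux2

variable {d T : ℕ}

lemma dABW_le (L M : Mat d T) {O : Mat d T} (hO : memO O) :
    dABW L M ≤ frobNorm (L - M * O) := by
  apply csInf_le
  · exact ⟨0, by rintro r ⟨O', _, rfl⟩; exact frobNorm_nonneg _⟩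
  · exact ⟨O, hO, rfl⟩

lemma dABW_nonneg (L M : Mat d T) : 0 ≤ dABW L M := by
  have hne : {r : ℝ | ∃ O : Mat d T, memO O ∧ r = frobNorm (L - M * O)}.Nonempty :=
    ⟨frobNorm (L - M * 1), 1, memO_one, rfl⟩
  apply le_csInf hne
  rintro r ⟨O', _, rfl⟩; exact frobNorm_nonneg _

lemma dABW_self (L : Mat d T) : dABW L L = 0 := by
  refine le_antisymm ?_ (dABW_nonneg L L)
  have := dABW_le L L memO_one
  simpa [frobNorm_zero] using this

lemma frob_swap (A B : Mat d T) {O : Mat d T} (hO : memO O) :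
    frobNorm (A - B * O) = frobNorm (B - A * Oᵀ) := by
  have h1 : (A - B * O) * Oᵀ = -(B - A * Oᵀ) := by
    rw [Matrix.sub_mul, Matrix.mul_assoc, memO_mul_transpose hO, Matrix.mul_one]
    abel
  rw [← frob_mul_orth (A - B * O) (memO_transpose hO), h1, frobNorm_neg]

lemma dABW_symm (L M : Mat d T) : dABW L M = dABW M L := by
  unfold dABW
  congr 1
  ext r
  constructor
  · rintro ⟨O, hO, rfl⟩
    exact ⟨Oᵀ, memO_transpose hO, by rw [frob_swap L M hO]⟩
  · rintro ⟨O, hO, rfl⟩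
    exact ⟨Oᵀ, memO_transpose hO, by rw [frob_swap M L hO]⟩

lemma trace_sym_swap {X O : Mat d T}
    (hOd : ∀ (t s : Fin T) (i j : Fin d), t ≠ s → O (t, i) (s, j) = 0)
    (hsym : ∀ t : Fin T, (blk X t).IsSymm) :
    (Xᵀ * O).trace = (X * O).trace := by
  have key : ∀ p q : Fin T × Fin d, X q p * O q p = X p q * O q p := by
    rintro ⟨t, i⟩ ⟨s, j⟩
    by_cases h : s = t
    · subst h
      have hx : X (s, j) (s, i) = X (s, i) (s, j) := by
        have := congrFun (congrFun (hsym s) j) i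
        simpa [Matrix.transpose_apply, blk] using this.symm
      rw [hx]
    · rw [hOd s t j i h, mul_zero, mul_zero]
  rw [Matrix.trace, Matrix.trace]
  apply Finset.sum_congr rfl
  intro p _
  rw [Matrix.diag_apply, Matrix.diag_apply, Matrix.mul_apply, Matrix.mul_apply]
  apply Finset.sum_congr rfl
  intro q _
  simpa [Matrix.transpose_apply] using key p q

lemma frob_sub_trace (A B : Mat d T) {O : Mat d T} (hO : memO O) :
    ((A - B * O)ᵀ * (A - B * O)).trace
      = (Aᵀ * A).trace + (Bᵀ * B).trace - 2 * (Aᵀ * (B * O)).trace := by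
  have hOO := memO_mul_transpose hO
  have e1 : ((B * O)ᵀ * (B * O)).trace = (Bᵀ * B).trace := by
    have hcancel : ∀ X : Mat d T, O * (Oᵀ * X) = X := fun X => by
      rw [← Matrix.mul_assoc, hOO, Matrix.one_mul]
    rw [Matrix.transpose_mul, Matrix.trace_mul_comm, Matrix.trace_mul_comm Bᵀ B]
    congr 1
    simp [Matrix.mul_assoc, hcancel]
  have e2 : ((B * O)ᵀ * A).trace = (Aᵀ * (B * O)).trace := by
    rw [← Matrix.trace_transpose ((B * O)ᵀ * A), Matrix.transpose_mul, Matrix.transpose_transpose]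
  rw [Matrix.transpose_sub, Matrix.sub_mul, Matrix.mul_sub, Matrix.mul_sub,
    Matrix.trace_sub, Matrix.trace_sub, Matrix.trace_sub, e1, e2]
  ring

end Aux2
/-- basic facts about `𝐎*(L,M)`: (a) stability under right multiplication by
`𝐎*(L,L)`, (b) `P ∈ 𝐎*(L,M)` implies `Pᵀ ∈ 𝐎*(M,L)`, (c) symmetry of the diagonal blocks of
`MᵀL` implies `𝐎*(L,M) = 𝐎*(M,L)`. -/
theorem stmt4 (d T : ℕ) (hd : 0 < d) (hT : 0 < T) (L M : Mat d T)
    (hL : memL L) (hM : memL M) :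
    (∀ O P : Mat d T, O ∈ OStar L L → P ∈ OStar L M → P * O ∈ OStar L M) ∧
    (∀ P : Mat d T, P ∈ OStar L M → Pᵀ ∈ OStar M L) ∧
    ((∀ t : Fin T, (blk (Mᵀ * L) t).IsSymm) → OStar L M = OStar M L) := by

  have hobj : (∀ t : Fin T, (blk (Mᵀ * L) t).IsSymm) → ∀ O : Mat d T, memO O →
      frobNorm (L - M * O) = frobNorm (M - L * O) := by
    intro hsym O hO
    rw [frobNorm_eq_sqrt_trace, frobNorm_eq_sqrt_trace, frob_sub_trace L M hO,
      frob_sub_trace M L hO]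
    have ht : (Lᵀ * (M * O)).trace = (Mᵀ * (L * O)).trace := by
      have h1 : Lᵀ * (M * O) = (Mᵀ * L)ᵀ * O := by
        rw [Matrix.transpose_mul, Matrix.transpose_transpose, Matrix.mul_assoc]
      have h2 : Mᵀ * (L * O) = (Mᵀ * L) * O := (Matrix.mul_assoc _ _ _).symm
      rw [h1, h2, trace_sym_swap hO.1 hsym]
    rw [ht]
    congr 1
    ring
  refine ⟨?_, ?_, ?_⟩
  · rintro O P ⟨hO, hOopt⟩ ⟨hP, hPopt⟩
    have hLO : L * O = L := by
      have h0 : frobNorm (L - L * O) = 0 := by rw [hOopt, dABW_self]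
      have h1 := sub_eq_zero.mp (frobNorm_eq_zero h0)
      exact h1.symm
    refine ⟨memO_mul hP hO, ?_⟩
    have he : L - M * (P * O) = (L - M * P) * O := by
      rw [Matrix.sub_mul, hLO, Matrix.mul_assoc]
    rw [he, frob_mul_orth _ hO, hPopt]
  · rintro P ⟨hP, hPopt⟩
    refine ⟨memO_transpose hP, ?_⟩
    have hs := frob_swap M L (memO_transpose hP)
    rw [Matrix.transpose_transpose] at hs
    rw [hs, hPopt, dABW_symm]
  · intro hsym
    ext O
    simp only [OStar, Set.mem_setOf_eq]
    constructor
    · rintro ⟨hO, hopt⟩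
      exact ⟨hO, by rw [← hobj hsym O hO, hopt, dABW_symm]⟩
    · rintro ⟨hO, hopt⟩
      exact ⟨hO, by rw [hobj hsym O hO, hopt, dABW_symm]⟩
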